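/- Let G ≅ (ℤ/2ℤ)^d be an elementary abelian 2-group of order n = 2^d with d ≥ 1, let G* = G \ {1}, and let 1 ≤ k ≤ n−1. Let Pr(Diam > 2) be the probability, under the uniform distribution on k-element subsets S of G*, that there exists y ∈ G* with y ∉ S and y not expressible as s₁s₂ with s₁, s₂ ∈ S. Then p(n, k, (n−2)/2) − k/(n−1) ≤ Pr(Diam > 2) ≤ (n−1) · p(n, k, (n−2)/2). -/

import Mathlib

/-- Integer binomial coefficient: `intChoose a b` is zero unless `0 ≤ b ≤ a`. -/
def intChoose (a b : ℤ) : ℤ :=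
  if 0 ≤ b ∧ b ≤ a then (a.toNat.choose b.toNat : ℤ) else 0

/-- `p(n,k,t) = (∑_{i=0}^t (-1)^i C(t,i) C(n-1-2i, k-2i)) / C(n-1,k)`. -/
def pFun (n k t : ℕ) : ℚ :=
  (∑ i ∈ Finset.range (t + 1),
      (-1) ^ i * (intChoose t i : ℚ) * (intChoose ((n : ℤ) - 1 - 2 * i) ((k : ℤ) - 2 * i) : ℚ))
    / ((n - 1).choose k : ℚ)

open Finset

theorem supersets_card {α : Type*} [DecidableEq α] (X B : Finset α) (hB : B ⊆ X) (k : ℕ)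
    (hk : B.card ≤ k) :
    ((X.powersetCard k).filter (fun S => B ⊆ S)).card
      = (X.card - B.card).choose (k - B.card) := by
  rw [← Finset.card_sdiff_of_subset hB, ← Finset.card_powersetCard]
  apply Finset.card_bij (fun S _ => S \ B)
  · intro S hS
    simp only [mem_filter, Finset.mem_powersetCard] at hS
    rw [Finset.mem_powersetCard]
    exact ⟨Finset.sdiff_subset_sdiff hS.1.1 le_rfl, by rw [Finset.card_sdiff_of_subset hS.2, hS.1.2]⟩
  · intro S hS T hT h
    simp only [mem_filter, Finset.mem_powersetCard] at hS hT
    rw [← Finset.sdiff_union_of_subset hS.2, ← Finset.sdiff_union_of_subset hT.2, h]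
  · intro T hT
    rw [Finset.mem_powersetCard] at hT
    refine ⟨T ∪ B, ?_, ?_⟩
    · simp only [mem_filter, Finset.mem_powersetCard]
      have hd : Disjoint T B := (Finset.sdiff_disjoint.mono_left hT.1)
      refine ⟨⟨Finset.union_subset (hT.1.trans (Finset.sdiff_subset)) hB, ?_⟩,
        Finset.subset_union_right⟩
      rw [Finset.card_union_of_disjoint hd, hT.2]
      omega
    · have hd : Disjoint T B := (Finset.sdiff_disjoint.mono_left hT.1)
      rw [Finset.union_sdiff_cancel_right hd]

theorem core_count {α : Type*} [DecidableEq α] (X Y : Finset α) (f : α → α)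
    (hYX : Y ⊆ X) (hfY : ∀ s ∈ Y, f s ∈ Y) (hinv : ∀ s ∈ Y, f (f s) = s)
    (hfix : ∀ s ∈ Y, f s ≠ s) (hout : ∀ s ∈ X, s ∉ Y → f s ∉ X)
    (k : ℕ) (hk : k ≤ X.card) :
    ((((X.powersetCard k).filter (fun S => ∀ s ∈ S, f s ∉ S)).card : ℤ)) =
      ∑ i ∈ Finset.range (Y.card / 2 + 1),
        (-1) ^ i * ((Y.card / 2).choose i : ℤ)
          * intChoose ((X.card : ℤ) - 2 * i) ((k : ℤ) - 2 * i) := by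
  set P : Finset (Finset α) := Y.image (fun s => {s, f s}) with hP
  -- basic facts about pairs
  have hmem : ∀ p ∈ P, ∃ s ∈ Y, p = {s, f s} := by
    intro p hp
    simp only [hP, Finset.mem_image] at hp
    obtain ⟨s, hs, h⟩ := hp
    exact ⟨s, hs, h.symm⟩
  have hcard2 : ∀ p ∈ P, p.card = 2 := by
    intro p hp
    obtain ⟨s, hs, rfl⟩ := hmem p hp
    rw [Finset.card_insert_of_notMem (by simp [Ne.symm (hfix s hs)]), Finset.card_singleton]
  have hpY : ∀ p ∈ P, p ⊆ Y := by
    intro p hp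
    obtain ⟨s, hs, rfl⟩ := hmem p hp
    intro x hx
    simp only [Finset.mem_insert, Finset.mem_singleton] at hx
    rcases hx with rfl | rfl
    · exact hs
    · exact hfY s hs
  have hdisj : ∀ p ∈ P, ∀ q ∈ P, p ≠ q → Disjoint p q := by
    intro p hp q hq hne
    obtain ⟨s, hs, rfl⟩ := hmem p hp
    obtain ⟨u, hu, rfl⟩ := hmem q hq
    rw [Finset.disjoint_left]
    intro x hx hx'
    simp only [Finset.mem_insert, Finset.mem_singleton] at hx hx'
    apply hne
    rcases hx with h1 | h1 <;> rcases hx' with h2 | h2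
    · rw [h1] at h2; rw [h2]
    · rw [h1] at h2; rw [h2, hinv u hu, Finset.pair_comm]
    · rw [h1] at h2; rw [← h2, hinv s hs, Finset.pair_comm]
    · have h3 : s = u := by rw [← hinv s hs, ← h1, h2, hinv u hu]
      rw [h3]
  have hYU : Y = P.biUnion (fun p => p) := by
    apply Finset.Subset.antisymm
    · intro s hs
      rw [Finset.mem_biUnion]
      exact ⟨{s, f s}, Finset.mem_image_of_mem _ hs, by simp⟩
    · intro x hx
      rw [Finset.mem_biUnion] at hx
      obtain ⟨p, hp, hxp⟩ := hx
      exact hpY p hp hxp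
  have hYcard : Y.card = 2 * P.card := by
    rw [hYU, Finset.card_biUnion hdisj]
    rw [Finset.sum_congr rfl (fun p hp => hcard2 p hp), Finset.sum_const, smul_eq_mul,
      mul_comm]
  have hTcard : ∀ T ⊆ P, (T.biUnion (fun p => p)).card = 2 * T.card := by
    intro T hT
    rw [Finset.card_biUnion (fun p hp q hq => hdisj p (hT hp) q (hT hq))]
    rw [Finset.sum_congr rfl (fun p hp => hcard2 p (hT hp)), Finset.sum_const, smul_eq_mul,
      mul_comm]
  -- condition translation
  have key : ∀ S ∈ X.powersetCard k, ((∀ s ∈ S, f s ∉ S) ↔ P.filter (· ⊆ S) = ∅) := by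
    intro S hS
    rw [Finset.mem_powersetCard] at hS
    rw [Finset.filter_eq_empty_iff]
    constructor
    · intro h p hp hpS
      obtain ⟨s, hs, rfl⟩ := hmem p hp
      exact h s (hpS (by simp)) (hpS (by simp))
    · intro h s hsS hfsS
      have hsY : s ∈ Y := by
        by_contra hsY
        exact hout s (hS.1 hsS) hsY (hS.1 hfsS)
      have hmemP : ({s, f s} : Finset α) ∈ P := Finset.mem_image_of_mem _ hsY
      refine h hmemP ?_
      intro x hx
      simp only [Finset.mem_insert, Finset.mem_singleton] at hx
      rcases hx with h1 | h1 <;> rw [h1]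
      · exact hsS
      · exact hfsS
  -- main computation
  have step1 : ((((X.powersetCard k).filter (fun S => ∀ s ∈ S, f s ∉ S)).card : ℤ)) =
      ∑ S ∈ X.powersetCard k, ∑ T ∈ (P.filter (· ⊆ S)).powerset, (-1 : ℤ) ^ T.card := by
    rw [Finset.card_filter]
    push_cast
    refine Finset.sum_congr rfl fun S hS => ?_
    rw [sum_powerset_neg_one_pow_card]
    by_cases h : ∀ s ∈ S, f s ∉ S
    · rw [if_pos h, if_pos ((key S hS).mp h)]
    · rw [if_neg h, if_neg (fun he => h ((key S hS).mpr he))]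
  have step2 : ∀ S : Finset α, (P.filter (· ⊆ S)).powerset
      = P.powerset.filter (fun T => T.biUnion (fun p => p) ⊆ S) := by
    intro S
    ext T
    simp only [Finset.mem_powerset, Finset.mem_filter]
    constructor
    · intro h
      have h1 : T ⊆ P := h.trans (Finset.filter_subset _ _)
      exact ⟨h1, Finset.biUnion_subset.mpr fun p hp => (Finset.mem_filter.mp (h hp)).2⟩
    · rintro ⟨h1, h2⟩ x hx
      exact Finset.mem_filter.mpr ⟨h1 hx, Finset.biUnion_subset.mp h2 x hx⟩
  have step3 : ∑ S ∈ X.powersetCard k, ∑ T ∈ (P.filter (· ⊆ S)).powerset, (-1:ℤ)^T.card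
      = ∑ T ∈ P.powerset, (-1:ℤ)^T.card *
          (((X.powersetCard k).filter (fun S => T.biUnion (fun p => p) ⊆ S)).card : ℤ) := by
    calc ∑ S ∈ X.powersetCard k, ∑ T ∈ (P.filter (· ⊆ S)).powerset, (-1:ℤ)^T.card
        = ∑ S ∈ X.powersetCard k, ∑ T ∈ P.powerset,
            if T.biUnion (fun p => p) ⊆ S then (-1:ℤ)^T.card else 0 := by
          refine Finset.sum_congr rfl fun S _ => ?_
          rw [step2 S, Finset.sum_filter]
      _ = ∑ T ∈ P.powerset, ∑ S ∈ X.powersetCard k,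
            if T.biUnion (fun p => p) ⊆ S then (-1:ℤ)^T.card else 0 := Finset.sum_comm
      _ = _ := by
          refine Finset.sum_congr rfl fun T _ => ?_
          rw [← Finset.sum_filter, Finset.sum_const, nsmul_eq_mul, mul_comm]
  have step4 : ∀ T ∈ P.powerset,
      ((((X.powersetCard k).filter (fun S => T.biUnion (fun p => p) ⊆ S)).card : ℤ))
        = intChoose ((X.card : ℤ) - 2 * T.card) ((k : ℤ) - 2 * T.card) := by
    intro T hT
    rw [Finset.mem_powerset] at hT
    have hBY : (T.biUnion (fun p => p)) ⊆ Y :=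
      Finset.biUnion_subset.mpr fun p hp => hpY p (hT hp)
    have hB : (T.biUnion (fun p => p)) ⊆ X := hBY.trans hYX
    have hBc := hTcard T hT
    have h2Y : 2 * T.card ≤ Y.card := hBc ▸ Finset.card_le_card hBY
    have h2X : 2 * T.card ≤ X.card := h2Y.trans (Finset.card_le_card hYX)
    by_cases hkt : 2 * T.card ≤ k
    · rw [supersets_card X _ hB k (by omega), hBc]
      rw [intChoose, if_pos ⟨by omega, by omega⟩]
      have e1 : ((X.card : ℤ) - 2 * T.card).toNat = X.card - 2 * T.card := by omega
      have e2 : ((k : ℤ) - 2 * T.card).toNat = k - 2 * T.card := by omega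
      rw [e1, e2]
    · have hfe : ((X.powersetCard k).filter (fun S => T.biUnion (fun p => p) ⊆ S)) = ∅ := by
        refine Finset.filter_eq_empty_iff.mpr fun S hS hBS => hkt ?_
        rw [Finset.mem_powersetCard] at hS
        calc 2 * T.card = (T.biUnion (fun p => p)).card := hBc.symm
          _ ≤ S.card := Finset.card_le_card hBS
          _ = k := hS.2
      rw [hfe, Finset.card_empty, intChoose, if_neg (by omega)]
      rfl
  rw [step1, step3]
  have step5 : ∑ T ∈ P.powerset, (-1:ℤ)^T.card *
        (((X.powersetCard k).filter (fun S => T.biUnion (fun p => p) ⊆ S)).card : ℤ)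
      = ∑ T ∈ P.powerset,
        (fun i : ℕ => (-1:ℤ)^i * intChoose ((X.card : ℤ) - 2 * (i:ℤ)) ((k : ℤ) - 2 * (i:ℤ))) T.card :=
    Finset.sum_congr rfl fun T hT => by rw [step4 T hT]
  rw [step5]
  rw [Finset.sum_powerset_apply_card
    (f := fun i : ℕ => (-1:ℤ)^i * intChoose ((X.card : ℤ) - 2 * (i:ℤ)) ((k : ℤ) - 2 * (i:ℤ)))]
  have ht : Y.card / 2 = P.card := by omega
  rw [ht]
  refine Finset.sum_congr rfl fun i _ => ?_
  simp only [nsmul_eq_mul]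
  ring
theorem filterCardCongr {α : Type*} (s : Finset α) (p q : α → Prop)
    (hp : DecidablePred p) (hq : DecidablePred q) (H : ∀ x ∈ s, p x ↔ q x) :
    @Finset.filter α p hp s = @Finset.filter α q hq s := by
  ext x
  simp only [Finset.mem_filter]
  exact and_congr_right fun hx => H x hx


theorem stmt_7 {G : Type*} [Group G] [Fintype G] [DecidableEq G]
    (d n k : ℕ) (hd : 1 ≤ d) (hn : n = 2 ^ d) (hcard : Fintype.card G = n)
    (helem : ∀ x : G, x * x = 1)
    (hk1 : 1 ≤ k) (hk2 : k ≤ n - 1) :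
    pFun n k ((n - 2) / 2) - (k : ℚ) / ((n : ℚ) - 1) ≤
        ((((Finset.univ.erase (1 : G)).powersetCard k).filter
            (fun S => ∃ y ∈ Finset.univ.erase (1 : G),
              y ∉ S ∧ ∀ s₁ ∈ S, ∀ s₂ ∈ S, y ≠ s₁ * s₂)).card : ℚ)
          / (((Finset.univ.erase (1 : G)).powersetCard k).card : ℚ) ∧
      ((((Finset.univ.erase (1 : G)).powersetCard k).filter
          (fun S => ∃ y ∈ Finset.univ.erase (1 : G),
            y ∉ S ∧ ∀ s₁ ∈ S, ∀ s₂ ∈ S, y ≠ s₁ * s₂)).card : ℚ)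
          / (((Finset.univ.erase (1 : G)).powersetCard k).card : ℚ)
        ≤ ((n : ℚ) - 1) * pFun n k ((n - 2) / 2) := by
  have hn2 : 2 ≤ n := by
    rw [hn]
    calc 2 = 2 ^ 1 := rfl
      _ ≤ 2 ^ d := Nat.pow_le_pow_right (by norm_num) hd
  set X : Finset G := Finset.univ.erase (1 : G) with hXdef
  have hXcard : X.card = n - 1 := by
    rw [hXdef, Finset.card_erase_of_mem (Finset.mem_univ _), Finset.card_univ, hcard]
  set t : ℕ := (n - 2) / 2 with htdef
  set N : ℕ := (n - 1).choose k with hNdef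
  set NumZ : ℤ := ∑ i ∈ Finset.range (t + 1),
      (-1) ^ i * ((t.choose i : ℤ)) * intChoose ((n : ℤ) - 1 - 2 * i) ((k : ℤ) - 2 * i)
    with hNumdef
  -- per-y count via core_count
  have hcount : ∀ y ∈ X,
      (((X.powersetCard k).filter (fun S => ∀ s ∈ S, s * y ∉ S)).card : ℤ) = NumZ := by
    intro y hy
    have hy1 : y ≠ 1 := Finset.ne_of_mem_erase hy
    have hyinv : y⁻¹ = y := inv_eq_of_mul_eq_one_right (helem y)
    have hYcard : (X.erase y).card = n - 2 := by
      rw [Finset.card_erase_of_mem hy, hXcard]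
      omega
    have h1X : (1 : G) ∉ X := Finset.notMem_erase _ _
    have hfY : ∀ s ∈ X.erase y, s * y ∈ X.erase y := by
      intro s hs
      have hs1 : s ≠ 1 := Finset.ne_of_mem_erase (Finset.mem_of_mem_erase hs)
      have hsy : s ≠ y := Finset.ne_of_mem_erase hs
      refine Finset.mem_erase.mpr ⟨?_, Finset.mem_erase.mpr ⟨?_, Finset.mem_univ _⟩⟩
      · intro h; exact hs1 (by rw [← mul_right_cancel (a := s) (b := y) (c := 1) ?_] <;>
          simp_all)
      · intro h
        apply hsy
        have : s = y⁻¹ := eq_inv_of_mul_eq_one_left h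
        rw [this, hyinv]
    have hinv : ∀ s ∈ X.erase y, (s * y) * y = s := by
      intro s _; rw [mul_assoc, helem y, mul_one]
    have hfix : ∀ s ∈ X.erase y, s * y ≠ s := by
      intro s _ h
      exact hy1 (by rwa [mul_eq_left] at h)
    have hout : ∀ s ∈ X, s ∉ X.erase y → s * y ∉ X := by
      intro s hs hsn
      have : s = y := by
        by_contra h
        exact hsn (Finset.mem_erase.mpr ⟨h, hs⟩)
      rw [this, helem y]
      exact h1X
    have hkX : k ≤ X.card := by omega
    have hc := core_count X (X.erase y) (fun s => s * y)
        (Finset.erase_subset _ _) hfY hinv hfix hout k hkX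
    rw [hYcard, hXcard] at hc
    have hcast : ((n - 1 : ℕ) : ℤ) = (n : ℤ) - 1 := by omega
    rw [hcast] at hc
    rw [hNumdef, htdef]
    convert hc using 2
    exact congrArg Finset.card (filterCardCongr _ _ _ _ _ (fun S _ => Iff.rfl))
  -- predicate equivalence
  have hpred : ∀ (y : G), ∀ S ∈ X.powersetCard k,
      ((∀ s₁ ∈ S, ∀ s₂ ∈ S, y ≠ s₁ * s₂) ↔ (∀ s ∈ S, s * y ∉ S)) := by
    intro y S _
    constructor
    · intro h s hs hsy
      exact (h s hs (s * y) hsy) (by rw [← mul_assoc, helem s, one_mul])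
    · intro h s₁ h₁ s₂ h₂ hy
      have h3 : s₂ = s₁ * y := by rw [hy, ← mul_assoc, helem s₁, one_mul]
      exact h s₁ h₁ (h3 ▸ h₂)
  classical
  set F : G → Finset (Finset G) := fun y => (X.powersetCard k).filter
    (fun S => y ∉ S ∧ ∀ s₁ ∈ S, ∀ s₂ ∈ S, y ≠ s₁ * s₂) with hFdef
  set A : G → Finset (Finset G) := fun y => (X.powersetCard k).filter
    (fun S => ∀ s ∈ S, s * y ∉ S) with hAdef
  have hAcard : ∀ y ∈ X, ((A y).card : ℤ) = NumZ := by
    intro y hy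
    rw [← hcount y hy]
  have hFA : ∀ y : G, F y ⊆ A y := by
    intro y S hS
    rw [hFdef, Finset.mem_filter] at hS
    rw [hAdef, Finset.mem_filter]
    exact ⟨hS.1, (hpred y S hS.1).mp hS.2.2⟩
  -- count of sets containing y
  have hyc : ∀ y ∈ X, ((X.powersetCard k).filter (fun S => y ∈ S)).card
      = (n - 2).choose (k - 1) := by
    intro y hy
    have h1 : ((X.powersetCard k).filter (fun S => y ∈ S))
        = ((X.powersetCard k).filter (fun S => {y} ⊆ S)) := by
      refine Finset.filter_congr fun S _ => by simp
    have e : n - 1 - 1 = n - 2 := by omega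
    rw [h1, supersets_card X {y} (Finset.singleton_subset_iff.mpr hy) k
      (by rw [Finset.card_singleton]; omega), Finset.card_singleton, hXcard, e]
  have hAF : ∀ y ∈ X, (A y).card ≤ (F y).card + (n - 2).choose (k - 1) := by
    intro y hy
    have hsub : A y ⊆ F y ∪ ((X.powersetCard k).filter (fun S => y ∈ S)) := by
      intro S hS
      rw [hAdef, Finset.mem_filter] at hS
      by_cases hyS : y ∈ S
      · exact Finset.mem_union_right _ (Finset.mem_filter.mpr ⟨hS.1, hyS⟩)
      · exact Finset.mem_union_left _ (Finset.mem_filter.mpr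
          ⟨hS.1, hyS, (hpred y S hS.1).mpr hS.2⟩)
    calc (A y).card ≤ (F y ∪ ((X.powersetCard k).filter (fun S => y ∈ S))).card :=
          Finset.card_le_card hsub
      _ ≤ (F y).card + ((X.powersetCard k).filter (fun S => y ∈ S)).card :=
          Finset.card_union_le _ _
      _ = (F y).card + (n - 2).choose (k - 1) := by rw [hyc y hy]
  -- the diameter event set
  set D : Finset (Finset G) := (X.powersetCard k).filter
    (fun S => ∃ y ∈ X, y ∉ S ∧ ∀ s₁ ∈ S, ∀ s₂ ∈ S, y ≠ s₁ * s₂) with hDdef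
  obtain ⟨y₀, hy₀⟩ : X.Nonempty := Finset.card_pos.mp (by omega)
  have hFD : F y₀ ⊆ D := by
    intro S hS
    rw [hFdef, Finset.mem_filter] at hS
    exact Finset.mem_filter.mpr ⟨hS.1, y₀, hy₀, hS.2⟩
  have hlow : NumZ - ((n - 2).choose (k - 1) : ℤ) ≤ (D.card : ℤ) := by
    have h1 := hAF y₀ hy₀
    have h2 := hAcard y₀ hy₀
    have h3 : (F y₀).card ≤ D.card := Finset.card_le_card hFD
    omega
  have hup : (D.card : ℤ) ≤ ((n - 1 : ℕ) : ℤ) * NumZ := by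
    have hsub : D ⊆ X.biUnion F := by
      intro S hS
      rw [hDdef, Finset.mem_filter] at hS
      obtain ⟨h1, y, hy, h2⟩ := hS
      exact Finset.mem_biUnion.mpr ⟨y, hy, Finset.mem_filter.mpr ⟨h1, h2⟩⟩
    calc (D.card : ℤ) ≤ ((X.biUnion F).card : ℤ) := by
          exact_mod_cast Finset.card_le_card hsub
      _ ≤ ∑ y ∈ X, ((F y).card : ℤ) := by exact_mod_cast Finset.card_biUnion_le
      _ ≤ ∑ y ∈ X, ((A y).card : ℤ) := Finset.sum_le_sum fun y _ =>
          by exact_mod_cast Finset.card_le_card (hFA y)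
      _ = ∑ y ∈ X, NumZ := Finset.sum_congr rfl hAcard
      _ = ((n - 1 : ℕ) : ℤ) * NumZ := by rw [Finset.sum_const, hXcard]; push_cast; ring
  -- rational computations
  have hNpos : 0 < N := Nat.choose_pos hk2
  have hNQ : (0 : ℚ) < (N : ℚ) := by exact_mod_cast hNpos
  have hden : ((X.powersetCard k).card : ℚ) = (N : ℚ) := by
    rw [Finset.card_powersetCard, hXcard]
  have hpFun : pFun n k t = (NumZ : ℚ) / (N : ℚ) := by
    rw [pFun, hNumdef]
    congr 1
    push_cast
    refine Finset.sum_congr rfl fun i hi => ?_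
    rw [Finset.mem_range] at hi
    have h1 : intChoose (t : ℤ) (i : ℤ) = (t.choose i : ℤ) := by
      rw [intChoose, if_pos ⟨by omega, by omega⟩]
      congr 1 <;> omega
    rw [h1]
    push_cast
    ring
  have hn1Q : ((n : ℚ) - 1) = ((n - 1 : ℕ) : ℚ) := by
    push_cast [Nat.cast_sub (by omega : 1 ≤ n)]
    ring
  have hkq : (k : ℚ) / ((n : ℚ) - 1) = (((n - 2).choose (k - 1) : ℕ) : ℚ) / (N : ℚ) := by
    have hch := Nat.add_one_mul_choose_eq (n - 2) (k - 1)
    have e1 : n - 2 + 1 = n - 1 := by omega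
    have e2 : k - 1 + 1 = k := by omega
    try simp only [Nat.succ_eq_add_one] at hch
    rw [e1, e2] at hch
    have hch2 : k * ((n - 1).choose k) = (n - 2).choose (k - 1) * (n - 1) := by
      rw [mul_comm, ← hch, mul_comm]
    rw [hn1Q, div_eq_div_iff (by exact_mod_cast by omega : ((n - 1 : ℕ) : ℚ) ≠ 0) (ne_of_gt hNQ),
      hNdef]
    exact_mod_cast hch2
  constructor
  · rw [hden, hpFun, hkq, div_sub_div_same, div_le_div_iff_of_pos_right hNQ]
    exact_mod_cast hlow
  · rw [hden, hpFun, hn1Q, ← mul_div_assoc]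
    rw [div_le_div_iff_of_pos_right hNQ]
    exact_mod_cast hup
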